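/- Let A, B be bounded positive invertible operators on a Hilbert space with 0 < m ≤ B ≤ m' < M' ≤ A ≤ M. Then for each ν ∈ [0,1], K(h')^r · (A⁻¹ #_ν B⁻¹) ≤ (1−ν)A⁻¹ + νB⁻¹, where r = min{ν, 1−ν}, h' = M'/m', and A #_ν B = A^{1/2}(A^{−1/2} B A^{−1/2})^ν A^{1/2} is the weighted geometric mean. -/

import Mathlib

/-- The Kantorovich constant. -/
noncomputable def Kc (x : ℝ) : ℝ := (x + 1) ^ 2 / (4 * x)

/-- The weighted operator geometric mean `A #_ν B`. -/
noncomputable def sharp {𝒜 : Type*} [CStarAlgebra 𝒜] [PartialOrder 𝒜] [StarOrderedRing 𝒜] (ν : ℝ) (a b : 𝒜) : 𝒜 :=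
  CFC.rpow a (1/2) * CFC.rpow (CFC.rpow a (-(1/2)) * b * CFC.rpow a (-(1/2))) ν * CFC.rpow a (1/2)

open scoped NNReal

private lemma scalar_key {h t ν : ℝ} (h1 : 1 < h) (hht : h ≤ t) (hν0 : 0 ≤ ν) (hν1 : ν ≤ 1) :
    Kc h ^ (min ν (1 - ν)) * t ^ ν ≤ (1 - ν) + ν * t := by
  have ht1 : 1 < t := h1.trans_le hht
  have ht0 : 0 < t := by linarith
  have hh0 : 0 < h := by linarith
  have hKt0 : 0 < Kc t := by
    unfold Kc; positivity
  have hKh0 : 0 < Kc h := by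
    unfold Kc; positivity
  have hKht : Kc h ≤ Kc t := by
    unfold Kc
    rw [div_le_div_iff₀ (by linarith) (by linarith)]
    nlinarith [mul_nonneg (sub_nonneg.2 hht) (sub_nonneg.2 (one_le_mul_of_one_le_of_one_le ht1.le h1.le : (1:ℝ) ≤ t * h))]
  have hr0 : 0 ≤ min ν (1 - ν) := le_min hν0 (by linarith)
  have step1 : Kc h ^ (min ν (1 - ν)) * t ^ ν ≤ Kc t ^ (min ν (1 - ν)) * t ^ ν := by
    have := Real.rpow_le_rpow hKh0.le hKht hr0
    exact mul_le_mul_of_nonneg_right this (Real.rpow_nonneg ht0.le ν)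
  refine step1.trans ?_
  rcases le_or_gt ν (1/2) with hc | hc
  · rw [min_eq_left (by linarith)]
    rw [← Real.mul_rpow hKt0.le ht0.le]
    have hKtt : Kc t * t = ((t+1)/2)^2 := by
      unfold Kc; field_simp; ring
    rw [hKtt]
    have hb0 : (0:ℝ) ≤ (t+1)/2 := by linarith
    rw [← Real.rpow_natCast ((t+1)/2) 2, ← Real.rpow_mul hb0]
    have := Real.geom_mean_le_arith_mean2_weighted (w₁ := 1 - 2*ν) (w₂ := 2*ν)
      (p₁ := 1) (p₂ := (t+1)/2) (by linarith) (by linarith) zero_le_one hb0 (by ring)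
    rw [Real.one_rpow, one_mul] at this
    calc ((t+1)/2) ^ ((2:ℕ) * ν) = ((t+1)/2) ^ (2*ν) := by norm_num
      _ ≤ (1 - 2*ν) * 1 + 2*ν * ((t+1)/2) := this
      _ = (1 - ν) + ν * t := by ring
  · rw [min_eq_right (by linarith)]
    set μ := 1 - ν with hμ
    have hμ0 : 0 ≤ μ := by simp [hμ]; linarith
    have hμ2 : 2 * μ ≤ 1 := by simp [hμ]; linarith
    have htν : t ^ ν = t * t ^ (-μ) := by
      rw [show ν = 1 + -μ by simp [hμ], Real.rpow_add ht0, Real.rpow_one]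
    rw [htν]
    have hrw : Kc t ^ μ * (t * t ^ (-μ)) = t * (Kc t / t) ^ μ := by
      rw [Real.div_rpow hKt0.le ht0.le, Real.rpow_neg ht0.le, div_eq_mul_inv]
      ring
    rw [hrw]
    have hKtd : Kc t / t = ((1/t+1)/2)^2 := by
      unfold Kc; field_simp; ring
    rw [hKtd]
    have hb0 : (0:ℝ) ≤ (1/t+1)/2 := by positivity
    rw [← Real.rpow_natCast ((1/t+1)/2) 2, ← Real.rpow_mul hb0]
    have key := Real.geom_mean_le_arith_mean2_weighted (w₁ := 1 - 2*μ) (w₂ := 2*μ)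
      (p₁ := 1) (p₂ := (1/t+1)/2) (by linarith) (by linarith) zero_le_one hb0 (by ring)
    rw [Real.one_rpow, one_mul] at key
    have : t * ((1/t+1)/2) ^ ((2:ℕ) * μ) ≤ t * ((1 - 2*μ) * 1 + 2*μ * ((1/t+1)/2)) := by
      apply mul_le_mul_of_nonneg_left _ ht0.le
      calc ((1/t+1)/2) ^ ((2:ℕ) * μ) = ((1/t+1)/2) ^ (2*μ) := by norm_num
        _ ≤ _ := key
    refine this.trans (le_of_eq ?_)
    have hμν : μ = 1 - ν := hμ
    field_simp [hμν]
    ring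

theorem stmt2 {𝒜 : Type*} [CStarAlgebra 𝒜] [PartialOrder 𝒜] [StarOrderedRing 𝒜]
    (A B : 𝒜) [Invertible A] [Invertible B] (m m' M' M ν : ℝ)
    (hm : 0 < m) (hmB : m • (1:𝒜) ≤ B) (hBm' : B ≤ m' • (1:𝒜)) (hm'M' : m' < M')
    (hM'A : M' • (1:𝒜) ≤ A) (hAM : A ≤ M • (1:𝒜)) (hν : ν ∈ Set.Icc (0:ℝ) 1) :
    Kc (M' / m') ^ (min ν (1 - ν)) • sharp ν (⅟A) (⅟B) ≤ (1 - ν) • ⅟A + ν • ⅟B := by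
  obtain ⟨hν0, hν1⟩ := hν
  by_cases htriv : Subsingleton 𝒜
  · exact le_of_eq (Subsingleton.elim _ _)
  have : Nontrivial 𝒜 := not_subsingleton_iff_nontrivial.mp htriv
  have h01 : (0:𝒜) ≤ 1 := by simpa using star_mul_self_nonneg (1:𝒜)
  have hB0 : 0 ≤ B := le_trans (smul_nonneg hm.le h01) hmB
  have hBsa : IsSelfAdjoint B := .of_nonneg hB0
  -- `0 < m'` via a point of the spectrum of `B`
  have hm'0 : 0 < m' := by
    obtain ⟨x, hx⟩ := CFC.spectrum_nonempty ℝ B hBsa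
    have hmx : m ≤ x := by
      have := (algebraMap_le_iff_le_spectrum (R := ℝ) (a := B) hBsa).mp
        (by rw [Algebra.algebraMap_eq_smul_one]; exact hmB)
      exact this x hx
    have hxm' : x ≤ m' := by
      have := (le_algebraMap_iff_spectrum_le (R := ℝ) (a := B) hBsa).mp
        (by rw [Algebra.algebraMap_eq_smul_one]; exact hBm')
      exact this x hx
    exact lt_of_lt_of_le hm (hmx.trans hxm')
  have hM'0 : 0 < M' := hm'0.trans hm'M'
  have hA0 : 0 ≤ A := le_trans (smul_nonneg hM'0.le h01) hM'A
  have hAsa : IsSelfAdjoint A := .of_nonneg hA0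
  -- units
  let uA : 𝒜ˣ := ⟨A, ⅟A, mul_invOf_self A, invOf_mul_self A⟩
  let uB : 𝒜ˣ := ⟨B, ⅟B, mul_invOf_self B, invOf_mul_self B⟩
  have hiA0 : (0:𝒜) ≤ ⅟A := CFC.inv_nonneg_of_nonneg uA hA0
  have hiB0 : (0:𝒜) ≤ ⅟B := CFC.inv_nonneg_of_nonneg uB hB0
  have hm'ne : m' ≠ 0 := hm'0.ne'
  let um' : 𝒜ˣ := ⟨m' • 1, m'⁻¹ • 1,
    by simp [smul_smul, smul_mul_assoc, mul_inv_cancel₀ hm'ne, inv_mul_cancel₀ hm'ne],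
    by simp [smul_smul, smul_mul_assoc, mul_inv_cancel₀ hm'ne, inv_mul_cancel₀ hm'ne]⟩
  have hBinv : m'⁻¹ • (1:𝒜) ≤ ⅟B :=
    CStarAlgebra.inv_le_inv (a := uB) (b := um') hB0 hBm'
  -- the square roots
  set d := CFC.rpow (⅟A) (-(1/2)) with hd
  set c := CFC.rpow (⅟A) (1/2) with hc
  have hd0 : (0:𝒜) ≤ d := CFC.rpow_nonneg
  have hc0 : (0:𝒜) ≤ c := CFC.rpow_nonneg
  have hdsa : IsSelfAdjoint d := .of_nonneg hd0
  have hcsa : IsSelfAdjoint c := .of_nonneg hc0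
  have hiAunit : IsUnit (⅟A) := (uA⁻¹ : 𝒜ˣ).isUnit
  have hzsp : 0 ∉ spectrum ℝ≥0 (⅟A) := spectrum.zero_notMem ℝ≥0 hiAunit
  have hdd : d * d = A := by
    have h1 : d * d = CFC.rpow (⅟A) (-(1/2) + -(1/2)) := (CFC.rpow_add hiAunit).symm
    have h2 : ((-(1/2) : ℝ) + -(1/2)) = -1 := by norm_num
    rw [h1, h2]
    exact CFC.rpow_neg_one_eq_inv (uA⁻¹ : 𝒜ˣ) hiA0
  have hcd : c * d = 1 := CFC.rpow_mul_rpow_neg (1/2) (Units.isStrictlyPositive_of_le (a := uA⁻¹) hiA0)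
  have hdc : d * c = 1 := CFC.rpow_neg_mul_rpow (1/2) (Units.isStrictlyPositive_of_le (a := uA⁻¹) hiA0)
  have hcc : c * c = ⅟A := by
    have h1 : c * c = CFC.rpow (⅟A) ((1/2 : ℝ) + 1/2) := (CFC.rpow_add hiAunit).symm
    have h2 : ((1/2 : ℝ) + 1/2) = 1 := by norm_num
    rw [h1, h2]
    exact CFC.rpow_one _ hiA0
  set X := d * ⅟B * d with hX
  have hX0 : (0:𝒜) ≤ X := conjugate_nonneg_of_nonneg hiB0 hd0
  have hXsa : IsSelfAdjoint X := .of_nonneg hX0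
  have hXlb : algebraMap ℝ 𝒜 (M'/m') ≤ X := by
    rw [Algebra.algebraMap_eq_smul_one]
    calc (M'/m') • (1:𝒜) = m'⁻¹ • (M' • 1) := by rw [smul_smul, div_eq_inv_mul]
      _ ≤ m'⁻¹ • A := smul_le_smul_of_nonneg_left hM'A (by positivity)
      _ = d * (m'⁻¹ • 1) * d := by rw [mul_smul_comm, mul_one, smul_mul_assoc, hdd]
      _ ≤ d * ⅟B * d := hdsa.conjugate_le_conjugate hBinv
  have hspec : ∀ x ∈ spectrum ℝ X, M'/m' ≤ x :=
    (algebraMap_le_iff_le_spectrum (R := ℝ) (a := X) hXsa).mp hXlb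
  have h'1 : 1 < M'/m' := (one_lt_div hm'0).mpr hm'M'
  have hspec0 : ∀ x ∈ spectrum ℝ X, 0 < x := fun x hx =>
    lt_of_lt_of_le (by linarith) (hspec x hx)
  set K := Kc (M'/m') ^ (min ν (1 - ν)) with hK
  have hrpowcont : ContinuousOn (fun t : ℝ => t ^ ν) (spectrum ℝ X) := fun x hx =>
    (Real.continuousAt_rpow_const x ν (Or.inl (hspec0 x hx).ne')).continuousWithinAt
  have hfcont : ContinuousOn (fun t : ℝ => K * t ^ ν) (spectrum ℝ X) :=
    continuousOn_const.mul hrpowcont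
  have hgcont : ContinuousOn (fun t : ℝ => (1-ν) + ν * t) (spectrum ℝ X) := by fun_prop
  have key : cfc (fun t : ℝ => K * t ^ ν) X ≤ cfc (fun t : ℝ => (1-ν) + ν * t) X :=
    cfc_mono (fun x hx => scalar_key h'1 (hspec x hx) hν0 hν1) hfcont hgcont
  have hcfc_g : cfc (fun t : ℝ => (1-ν) + ν * t) X = (1-ν) • 1 + ν • X := by
    rw [cfc_const_add (R := ℝ) (1-ν) (fun t => ν * t) X (by fun_prop) hXsa,
      cfc_const_mul_id ν X hXsa, Algebra.algebraMap_eq_smul_one]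
  have hXrpow : cfc (fun t : ℝ => t ^ ν) X = CFC.rpow X ν := by
    have h1 : CFC.rpow X ν = cfc (fun t : ℝ => (((t.toNNReal : ℝ≥0) ^ ν : ℝ≥0) : ℝ)) X :=
      cfc_nnreal_eq_real _ _ hX0
    rw [h1]
    apply cfc_congr
    intro x hx
    show x ^ ν = ((x.toNNReal ^ ν : ℝ≥0) : ℝ)
    rw [NNReal.coe_rpow, Real.coe_toNNReal x (hspec0 x hx).le]
  have hcfc_f : cfc (fun t : ℝ => K * t ^ ν) X = K • CFC.rpow X ν := by
    rw [cfc_const_mul K _ X hrpowcont, hXrpow]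
  rw [hcfc_f, hcfc_g] at key
  have conj := hcsa.conjugate_le_conjugate key
  have lhs_eq : c * (K • CFC.rpow X ν) * c = K • sharp ν (⅟A) (⅟B) := by
    rw [mul_smul_comm, smul_mul_assoc]
    rfl
  have rhs_eq : c * ((1-ν) • 1 + ν • X) * c = (1-ν) • ⅟A + ν • ⅟B := by
    have hXc : c * X * c = ⅟B := by
      have h1 : c * (d * ⅟B * d) * c = (c * d) * ⅟B * (d * c) := by
        simp only [mul_assoc]
      rw [hX, h1, hcd, hdc, one_mul, mul_one]
    rw [mul_add, add_mul, mul_smul_comm, smul_mul_assoc, mul_one, hcc,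
      mul_smul_comm, smul_mul_assoc, hXc]
  rw [lhs_eq, rhs_eq] at conj
  exact conj
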